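/- Every invariant set S satisfies PA_Y ∩ PA(AN_Y ∩ CH_E) ⊆ S, i.e., every node that is a parent of Y and also a parent of some node that is both an ancestor of Y and a child of E belongs to every invariant set. -/

import Mathlib

/-- Nodes of the graph: the environment node `E`, predictor nodes `V j` for
`j ∈ {1, …, d}` (represented by `Fin d`), and the response node `Y`. -/
inductive Node (d : ℕ) : Type where
  | E : Node d
  | V : Fin d → Node d
  | Y : Node d
deriving DecidableEq

/-- A directed acyclic graph on `{E} ∪ {1, …, d} ∪ {Y}` in which `E` has no
parents (`E` is exogenous). -/
structure CGraph (d : ℕ) where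
  adj : Node d → Node d → Prop
  acyclic : ∀ v, ¬ Relation.TransGen adj v v
  exogenous : ∀ v, ¬ adj v Node.E

namespace CGraph

variable {d : ℕ} (G : CGraph d)

/-- Undirected adjacency: an edge between `u` and `v` in either direction. -/
def Edge (u v : Node d) : Prop := G.adj u v ∨ G.adj v u

/-- `p` is a path between `a` and `b`: a duplicate-free list of nodes starting
at `a`, ending at `b`, with consecutive nodes adjacent (in either direction). -/
def IsPath (p : List (Node d)) (a b : Node d) : Prop :=
  p.head? = some a ∧ p.getLast? = some b ∧ p.Nodup ∧ p.Chain' G.Edge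

/-- `x` is a (strict) descendant of `v`. -/
def Desc (v x : Node d) : Prop := Relation.TransGen G.adj v x

/-- The consecutive triple `u, m, w` on a path blocks the path given `C`:
either `m` is a non-collider lying in `C`, or `m` is a collider such that
neither `m` nor any of its descendants lies in `C`. -/
def BlockedAt (C : Set (Node d)) (u m w : Node d) : Prop :=
  (¬ (G.adj u m ∧ G.adj w m) ∧ m ∈ C) ∨
  ((G.adj u m ∧ G.adj w m) ∧ m ∉ C ∧ ∀ x, G.Desc m x → x ∉ C)

/-- A path `p` is blocked by `C` if some consecutive triple on it blocks it. -/
def Blocked (C : Set (Node d)) (p : List (Node d)) : Prop :=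
  ∃ q u m w r, p = q ++ u :: m :: w :: r ∧ G.BlockedAt C u m w

/-- `a` and `b` are d-separated given `C`: every path between them is blocked. -/
def DSep (a b : Node d) (C : Set (Node d)) : Prop :=
  ∀ p, G.IsPath p a b → G.Blocked C p

/-- `S ⊆ {1, …, d}` is invariant if `E` and `Y` are d-separated given `S`. -/
def Invariant (S : Set (Fin d)) : Prop := G.DSep Node.E Node.Y (Node.V '' S)

/-- `S` is minimally invariant if it is invariant and no strict subset of `S`
is invariant. -/
def MinInvariant (S : Set (Fin d)) : Prop :=
  G.Invariant S ∧ ∀ S', S' ⊂ S → ¬ G.Invariant S'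

/-- `S_AS`: the union of all minimally invariant sets. -/
def SAS : Set (Fin d) := ⋃₀ {S | G.MinInvariant S}

/-- `S_ICP`: the intersection of all invariant sets (`∅` if there are none). -/
def SICP : Set (Fin d) :=
  {j | (∃ S, G.Invariant S) ∧ ∀ S, G.Invariant S → j ∈ S}

/-- `S_AS^m`: the union of all minimally invariant sets of cardinality `≤ m`. -/
def SASm (m : ℕ) : Set (Fin d) := ⋃₀ {S | G.MinInvariant S ∧ S.ncard ≤ m}

/-- The parents of `Y` among `{1, …, d}`. -/
def paY : Set (Fin d) := {j | G.adj (Node.V j) Node.Y}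

/-- The children of `E` among `{1, …, d}`. -/
def chE : Set (Fin d) := {j | G.adj Node.E (Node.V j)}

/-- The ancestors of `Y` among `{1, …, d}`. -/
def anY : Set (Fin d) := {j | Relation.TransGen G.adj (Node.V j) Node.Y}

/-- `PA(A)`: the union of the parent sets of the elements of `A ⊆ {1, …, d}`. -/
def paOf (A : Set (Fin d)) : Set (Fin d) := {j | ∃ i ∈ A, G.adj (Node.V j) (Node.V i)}

end CGraph

lemma not_nodup_decomp {α : Type*} : ∀ (l : List α), ¬ l.Nodup →
    ∃ (x : α) (l1 l2 l3 : List α), l = l1 ++ x :: l2 ++ x :: l3 := by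
  intro l
  induction l with
  | nil => simp
  | cons a t ih =>
    intro h
    by_cases ha : a ∈ t
    · obtain ⟨s, u, rfl⟩ := List.append_of_mem ha
      exact ⟨a, [], s, u, by simp⟩
    · have ht : ¬ t.Nodup := by
        intro hnd; exact h (List.nodup_cons.mpr ⟨ha, hnd⟩)
      obtain ⟨x, l1, l2, l3, rfl⟩ := ih ht
      exact ⟨x, a :: l1, l2, l3, by simp⟩

lemma chain_mem_rel {α : Type*} {r : α → α → Prop} :
    ∀ {a : α} {l : List α}, List.Chain r a l → ∀ x ∈ l, ∃ y, r y x := by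
  intro a l
  induction l generalizing a with
  | nil => simp
  | cons c t ih =>
    intro h x hx
    replace h := List.isChain_cons_cons.mp h
    rcases List.mem_cons.mp hx with rfl | hx
    · exact ⟨a, h.1⟩
    · exact ih h.2 x hx

lemma chain_mem_transGen {α : Type*} {r : α → α → Prop} :
    ∀ {a : α} {l : List α}, List.Chain r a l → ∀ x ∈ l, Relation.TransGen r a x := by
  intro a l
  induction l generalizing a with
  | nil => simp
  | cons c t ih =>
    intro h x hx
    replace h := List.isChain_cons_cons.mp h
    rcases List.mem_cons.mp hx with rfl | hx
    · exact Relation.TransGen.single h.1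
    · exact Relation.TransGen.head h.1 (ih h.2 x hx)

lemma exists_nodup_chain_aux {α : Type*} {r : α → α → Prop} {b : α} :
    ∀ (n : ℕ) (l : List α) (a : α), l.length ≤ n → List.Chain r a l →
      l.getLast? = some b → a ≠ b →
      ∃ m : List α, m ≠ [] ∧ List.Chain r a m ∧ m.getLast? = some b ∧ (a :: m).Nodup := by
  intro n
  induction n with
  | zero =>
    intro l a hl _ hlast _
    have : l = [] := List.length_eq_zero_iff.mp (Nat.le_zero.mp hl)
    subst this; simp at hlast
  | succ n ih =>
    intro l a hl hc hlast hab
    by_cases hnd : (a :: l).Nodup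
    · refine ⟨l, ?_, hc, hlast, hnd⟩
      rintro rfl; simp at hlast
    · obtain ⟨x, l1, l2, l3, hdec⟩ := not_nodup_decomp (a :: l) hnd
      cases l1 with
      | nil =>
        simp only [List.nil_append] at hdec
        injection hdec with h1 h2
        subst h1; subst h2
        simp only [List.append_eq] at hl hc hlast
        have hsplit := List.isChain_cons_split.mp hc
        cases l3 with
        | nil =>
          exfalso
          have h : (l2 ++ [a]).getLast? = some b := hlast
          rw [List.getLast?_concat] at h
          exact hab (Option.some.inj h)
        | cons c t =>
          have hlast3 : (c :: t).getLast? = some b := by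
            have h1 : (l2 ++ a :: c :: t).getLast? = (a :: c :: t).getLast? := by
              rw [List.getLast?_append, List.getLast?_eq_getLast (l := a :: c :: t) (by simp)]; rfl
            rw [h1, List.getLast?_cons_cons] at hlast
            exact hlast
          have hlen : (c :: t).length ≤ n := by
            simp [List.length_append] at hl ⊢; omega
          exact ih (c :: t) a hlen hsplit.2 hlast3 hab
      | cons e l1' =>
        rw [List.cons_append] at hdec
        injection hdec with h1 h2
        subst h1; subst h2
        simp only [List.append_eq] at hl hc hlast
        have hsplit := List.isChain_cons_split.mp (show List.Chain r a ((l1' ++ x :: l2) ++ x :: l3) by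
          simpa [List.append_assoc] using hc)
        have hc2 : List.Chain r a (l1' ++ (x :: (l2 ++ x :: l3))) := by
          simpa [List.append_assoc] using hc
        have hsplit2 := (List.isChain_cons_split (l₁ := l1') (c := x) (l₂ := l2 ++ x :: l3)).mp hc2
        have hx3 : List.Chain r x l3 := hsplit.2
        have hax : List.Chain r a (l1' ++ [x]) := hsplit2.1
        have hcnew : List.Chain r a (l1' ++ x :: l3) := List.isChain_cons_split.mpr ⟨hax, hx3⟩
        have hlastnew : (l1' ++ x :: l3).getLast? = some b := by
          cases l3 with
          | nil =>
            have h : ((l1' ++ x :: l2) ++ [x]).getLast? = some b := by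
              simpa [List.append_assoc] using hlast
            rw [List.getLast?_concat] at h
            simpa [List.getLast?_concat] using h
          | cons c t =>
            have h1 : (l1' ++ x :: l2 ++ x :: c :: t).getLast? = (c :: t).getLast? := by
              rw [List.getLast?_append, List.getLast?_append,
                List.getLast?_eq_getLast (l := c :: t) (by simp)]; rfl
            have h2 : (l1' ++ x :: c :: t).getLast? = (c :: t).getLast? := by
              rw [List.getLast?_append, List.getLast?_eq_getLast (l := x :: c :: t) (by simp),
                List.getLast?_eq_getLast (l := c :: t) (by simp)]
              simp [List.getLast_cons]
            rw [h2, ← h1]; exact hlast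
        have hlen : (l1' ++ x :: l3).length ≤ n := by
          simp [List.length_append] at hl ⊢; omega
        exact ih _ a hlen hcnew hlastnew hab


lemma exists_nodup_chain {α : Type*} {r : α → α → Prop} {a b : α}
    (h : Relation.TransGen r a b) (hab : a ≠ b) :
    ∃ m : List α, m ≠ [] ∧ List.Chain r a m ∧ m.getLast? = some b ∧ (a :: m).Nodup := by
  obtain ⟨l, hc, hl⟩ := List.exists_isChain_cons_of_relationReflTransGen h.to_reflTransGen
  cases l with
  | nil => simp at hl; exact absurd hl hab
  | cons c t =>
    have hlast : (c :: t).getLast? = some b := by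
      rw [List.getLast?_eq_getLast (l := c :: t) (by simp), ← hl]
      rfl
    exact exists_nodup_chain_aux (c :: t).length (c :: t) a le_rfl hc hlast hab



/-- every invariant set `S` satisfies
`PA_Y ∩ PA(AN_Y ∩ CH_E) ⊆ S`. -/
theorem paY_inter_paOf_subset_invariant {d : ℕ} (G : CGraph d)
    (S : Set (Fin d)) (hS : G.Invariant S) :
    G.paY ∩ G.paOf (G.anY ∩ G.chE) ⊆ S := by
  rintro j ⟨hjY, i, ⟨hiAn, hiCh⟩, hji⟩
  by_contra hjS
  have hijF : i ≠ j := by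
    rintro rfl; exact G.acyclic _ (Relation.TransGen.single hji)
  -- Path 1 : E → V i ← V j → Y
  have hp1 : G.IsPath [Node.E, Node.V i, Node.V j, Node.Y] Node.E Node.Y := by
    refine ⟨rfl, by simp, ?_, ?_⟩
    · simp [hijF, Ne.symm hijF]
    · refine List.isChain_cons_cons.mpr ⟨Or.inl hiCh, List.isChain_cons_cons.mpr ⟨Or.inr hji,
        List.isChain_cons_cons.mpr ⟨Or.inl hjY, List.isChain_singleton _⟩⟩⟩
  obtain ⟨q, u, m, w, r, hp, hb⟩ := hS _ hp1
  have key : (Node.V i : Node d) ∉ (Node.V '' S) ∧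
      ∀ x, G.Desc (Node.V i) x → x ∉ (Node.V '' S) := by
    rcases q with _ | ⟨a, _ | ⟨b, q⟩⟩
    · simp only [List.nil_append] at hp
      injection hp with h1 hp; injection hp with h2 hp; injection hp with h3 hp
      subst h1; subst h2; subst h3
      rcases hb with ⟨hn, _⟩ | ⟨_, h1, h2⟩
      · exact absurd ⟨hiCh, hji⟩ hn
      · exact ⟨h1, h2⟩
    · simp only [List.cons_append, List.nil_append] at hp
      injection hp with h0 hp; injection hp with h1 hp; injection hp with h2 hp
      injection hp with h3 hp
      subst h1; subst h2; subst h3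
      exfalso
      rcases hb with ⟨_, hmem⟩ | ⟨⟨hc1, _⟩, _⟩
      · obtain ⟨k, hk, hkeq⟩ := hmem
        injection hkeq with h; subst h; exact hjS hk
      · exact G.acyclic _ (Relation.TransGen.head hji (Relation.TransGen.single hc1))
    · exfalso
      have := congrArg List.length hp
      simp [List.length_append] at this
      omega
  obtain ⟨hViC, hdesc⟩ := key
  have hiY : (Node.V i : Node d) ≠ Node.Y := fun h => by cases h
  obtain ⟨mlist, hm0, hmc, hml, hmnd⟩ := exists_nodup_chain hiAn hiY
  have hchain2 : List.Chain G.adj Node.E (Node.V i :: mlist) :=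
    List.isChain_cons_cons.mpr ⟨hiCh, hmc⟩
  have hp2 : G.IsPath (Node.E :: Node.V i :: mlist) Node.E Node.Y := by
    refine ⟨rfl, ?_, ?_, ?_⟩
    · cases mlist with
      | nil => exact absurd rfl hm0
      | cons c t => rw [List.getLast?_cons_cons, List.getLast?_cons_cons]; exact hml
    · refine List.nodup_cons.mpr ⟨?_, hmnd⟩
      intro hmem
      rcases List.mem_cons.mp hmem with h | h
      · cases h
      · obtain ⟨y, hy⟩ := chain_mem_rel hmc _ h
        exact G.exogenous y hy
    · exact List.Chain.imp (fun a b h => Or.inl h) hchain2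
  obtain ⟨q, u, mm, w, r, hp, hb⟩ := hS _ hp2
  have hinfix : [u, mm, w] <:+: (Node.E :: Node.V i :: mlist) :=
    ⟨q, r, by rw [hp]; simp⟩
  have h3 : List.Chain' G.adj [u, mm, w] :=
    List.IsChain.infix (show List.Chain' G.adj (Node.E :: Node.V i :: mlist) from hchain2) hinfix
  have humm : G.adj u mm := (List.isChain_cons_cons.mp h3).1
  have hmmw : G.adj mm w := (List.isChain_cons_cons.mp (List.isChain_cons_cons.mp h3).2).1
  have hmmE : mm ≠ Node.E := fun h => G.exogenous u (h ▸ humm)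
  have hmmmem : mm ∈ Node.V i :: mlist := by
    have hmem : mm ∈ Node.E :: Node.V i :: mlist := by rw [hp]; simp
    rcases List.mem_cons.mp hmem with h | h
    · exact absurd h hmmE
    · exact h
  have hmmC : mm ∉ (Node.V '' S) := by
    rcases List.mem_cons.mp hmmmem with h | h
    · rw [h]; exact hViC
    · exact hdesc mm (chain_mem_transGen hmc _ h)
  rcases hb with ⟨_, hmem⟩ | ⟨⟨_, hwm⟩, _⟩
  · exact hmmC hmem
  · exact G.acyclic mm (Relation.TransGen.head hmmw (Relation.TransGen.single hwm))
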